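/- For the constrained problem min ‖(A₁ A₂) − (X₁ X₂)‖_F subject to X₁ = A₁ and rank(X₁ X₂) ≤ r with rank(A₁) = k ≤ r, the optimal objective value equals (σ_{r−k+1}² + σ_{r−k+2}² + ⋯)^{1/2}, where σ_i are the singular values of P⊥_{A₁}(A₂). -/

import Mathlib

open Matrix Filter Topology

noncomputable def frobSq {α β : Type*} [Fintype α] [Fintype β] (A : Matrix α β ℝ) : ℝ :=
  ∑ i, ∑ j, (A i j) ^ 2

noncomputable def frob {α β : Type*} [Fintype α] [Fintype β] (A : Matrix α β ℝ) : ℝ :=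
  Real.sqrt (frobSq A)

section Frob
variable {α β : Type*} [Fintype α] [Fintype β]

lemma frobSq_nonneg (A : Matrix α β ℝ) : 0 ≤ frobSq A :=
  Finset.sum_nonneg fun _ _ => Finset.sum_nonneg fun _ _ => sq_nonneg _

lemma frobSq_eq_trace (A : Matrix α β ℝ) : frobSq A = Matrix.trace (Aᵀ * A) := by
  simp only [frobSq, Matrix.trace, Matrix.diag, Matrix.mul_apply, Matrix.transpose_apply]
  rw [Finset.sum_comm]
  simp [sq]

lemma frobSq_mul_orthL {γ : Type*} [Fintype γ] [DecidableEq α] (U : Matrix γ α ℝ)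
    (hU : Uᵀ * U = 1) (M : Matrix α β ℝ) : frobSq (U * M) = frobSq M := by
  rw [frobSq_eq_trace, frobSq_eq_trace, Matrix.transpose_mul]
  rw [Matrix.mul_assoc, ← Matrix.mul_assoc Uᵀ U M, hU, Matrix.one_mul]

lemma frobSq_mul_orthR {γ : Type*} [Fintype γ] [DecidableEq γ] (V : Matrix γ γ ℝ)
    (hV : Vᵀ * V = 1) (M : Matrix α γ ℝ) : frobSq (M * Vᵀ) = frobSq M := by
  rw [frobSq_eq_trace, frobSq_eq_trace, Matrix.transpose_mul, Matrix.transpose_transpose,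
    Matrix.mul_assoc, Matrix.trace_mul_comm, Matrix.mul_assoc, Matrix.mul_assoc, hV,
    Matrix.mul_one]

lemma frobSq_split {γ : Type*} [Fintype γ] [DecidableEq γ] (Q : Matrix γ γ ℝ)
    (hQs : Qᵀ = Q) (hQi : Q * Q = Q) (M : Matrix γ β ℝ) :
    frobSq M = frobSq (Q * M) + frobSq ((1 - Q) * M) := by
  rw [frobSq_eq_trace, frobSq_eq_trace, frobSq_eq_trace, Matrix.transpose_mul,
    Matrix.transpose_mul, Matrix.transpose_sub, Matrix.transpose_one, hQs]
  rw [Matrix.mul_assoc Mᵀ Q (Q * M), ← Matrix.mul_assoc Q Q M, hQi]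
  have h1 : (1 - Q) * ((1 - Q) * M) = (1 - Q) * M := by
    rw [← Matrix.mul_assoc]
    rw [show (1 - Q) * (1 - Q) = 1 - Q - (Q - Q * Q) by noncomm_ring, hQi, sub_self, sub_zero]
  rw [Matrix.mul_assoc Mᵀ (1 - Q) ((1 - Q) * M), h1, ← Matrix.trace_add, ← Matrix.mul_add]
  congr 2
  rw [Matrix.sub_mul, Matrix.one_mul, add_sub_cancel]

end Frob


open Matrix Module
open scoped RealInnerProductSpace


section Sums

lemma range_inter_range (a b : ℕ) :
    Finset.range a ∩ Finset.range b = Finset.range (min a b) := by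
  ext n; simp [lt_min_iff]

lemma diag_sum {m' n' : ℕ} (g : ℕ → ℝ) :
    (∑ i : Fin m', ∑ j : Fin n', if (i : ℕ) = (j : ℕ) then g (i : ℕ) else 0)
      = ∑ n ∈ Finset.range (min m' n'), g n := by
  have h1 : ∀ i : Fin m', (∑ j : Fin n', if (i : ℕ) = (j : ℕ) then g (i : ℕ) else 0)
      = if (i : ℕ) < n' then g i else 0 := by
    intro i
    by_cases h : (i : ℕ) < n'
    · rw [if_pos h, Finset.sum_eq_single (⟨i, h⟩ : Fin n')]
      · simp
      · intro j _ hj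
        rw [if_neg]
        intro hc
        exact hj (by simp [Fin.ext_iff, ← hc])
      · simp
    · rw [if_neg h]
      apply Finset.sum_eq_zero
      intro j _
      rw [if_neg]
      omega
  rw [Finset.sum_congr rfl fun i _ => h1 i, Fin.sum_univ_eq_sum_range
    (fun n => if n < n' then g n else 0) m']
  calc (∑ n ∈ Finset.range m', if n < n' then g n else 0)
      = ∑ n ∈ Finset.range m', if n ∈ Finset.range n' then g n else 0 := by
        apply Finset.sum_congr rfl; intro n _; simp
    _ = ∑ n ∈ Finset.range m' ∩ Finset.range n', g n := by rw [Finset.sum_ite_mem]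
    _ = _ := by rw [range_inter_range]

lemma shift_sum (g : ℕ → ℝ) (N ρ : ℕ) :
    (∑ n ∈ Finset.range N, if n < ρ then 0 else g (n + 1))
      = ∑ i ∈ Finset.Icc (ρ + 1) N, g i := by
  by_cases h : ρ ≤ N
  · have e1 : Finset.range N = Finset.Ico 0 N := by rw [Finset.range_eq_Ico]
    rw [e1, ← Finset.sum_Ico_consecutive _ (Nat.zero_le ρ) h]
    have e2 : ∀ n ∈ Finset.Ico 0 ρ, (if n < ρ then (0:ℝ) else g (n+1)) = 0 := by
      intro n hn; simp only [Finset.mem_Ico] at hn; rw [if_pos hn.2]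
    rw [Finset.sum_congr rfl e2, Finset.sum_const_zero, zero_add]
    have e3 : ∀ n ∈ Finset.Ico ρ N, (if n < ρ then (0:ℝ) else g (n+1)) = g (n+1) := by
      intro n hn; simp only [Finset.mem_Ico] at hn; rw [if_neg (by omega)]
    rw [Finset.sum_congr rfl e3]
    rw [← Finset.Ico_add_one_right_eq_Icc, Finset.sum_Ico_eq_sum_range, Finset.sum_Ico_eq_sum_range]
    have : N + 1 - (ρ + 1) = N - ρ := by omega
    rw [this]
    apply Finset.sum_congr rfl
    intro j _
    congr 1
    omega
  · rw [Finset.Icc_eq_empty (by omega), Finset.sum_empty]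
    apply Finset.sum_eq_zero
    intro n hn
    simp only [Finset.mem_range] at hn
    rw [if_pos (by omega)]

lemma tail_eq (g : ℕ → ℝ) (N ρ : ℕ) :
    (∑ i ∈ Finset.Icc (min ρ N + 1) N, g i) = ∑ i ∈ Finset.Icc (ρ + 1) N, g i := by
  rcases le_or_gt ρ N with h | h
  · rw [min_eq_left h]
  · rw [min_eq_right h.le, Finset.Icc_eq_empty (by omega), Finset.Icc_eq_empty (by omega)]

lemma comb_bound (a w : ℕ → ℝ) (M ρ : ℕ)
    (ha : ∀ i j : ℕ, i ≤ j → a j ≤ a i) (ha0 : ∀ i, 0 ≤ a i)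
    (hw0 : ∀ i, 0 ≤ w i) (hw1 : ∀ i, w i ≤ 1)
    (hsum : ∑ i ∈ Finset.range M, w i ≤ (ρ : ℝ)) :
    ∑ i ∈ Finset.range M, a i * w i ≤ ∑ i ∈ Finset.range (min ρ M), a i := by
  set ρ' := min ρ M with hρ'
  set c := a ρ' with hc
  have hwsum' : ∑ i ∈ Finset.range M, w i ≤ (ρ' : ℝ) := by
    rcases min_cases ρ M with ⟨h1, h2⟩ | ⟨h1, h2⟩
    · rw [hρ', h1]; exact hsum
    · rw [hρ', h1]
      calc ∑ i ∈ Finset.range M, w i ≤ ∑ i ∈ Finset.range M, 1 :=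
            Finset.sum_le_sum fun i _ => hw1 i
        _ = (M : ℝ) := by simp
  have key : ∀ i ∈ Finset.range M, a i * w i ≤ (if i ∈ Finset.range ρ' then a i - c else 0)
      + c * w i := by
    intro i _
    by_cases h : i ∈ Finset.range ρ'
    · rw [if_pos h]
      simp only [Finset.mem_range] at h
      have h1 : c ≤ a i := ha i ρ' (by omega)
      nlinarith [hw1 i, hw0 i, ha0 i]
    · rw [if_neg h]
      simp only [Finset.mem_range, not_lt] at h
      have h1 : a i ≤ c := ha ρ' i h
      nlinarith [hw1 i, hw0 i, ha0 ρ']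
  calc ∑ i ∈ Finset.range M, a i * w i
      ≤ ∑ i ∈ Finset.range M, ((if i ∈ Finset.range ρ' then a i - c else 0) + c * w i) :=
        Finset.sum_le_sum key
    _ = (∑ i ∈ Finset.range M ∩ Finset.range ρ', (a i - c)) + c * ∑ i ∈ Finset.range M, w i := by
        rw [Finset.sum_add_distrib, Finset.sum_ite_mem, Finset.mul_sum]
    _ ≤ (∑ i ∈ Finset.range ρ', (a i - c)) + c * ρ' := by
        have : Finset.range M ∩ Finset.range ρ' = Finset.range ρ' := by
          rw [Finset.inter_comm, range_inter_range, min_eq_left (by omega)]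
        rw [this]
        have hc0 : 0 ≤ c := ha0 ρ'
        gcongr
    _ = ∑ i ∈ Finset.range ρ', a i := by
        rw [Finset.sum_sub_distrib, Finset.sum_const, Finset.card_range]
        ring


section RankLemmas
variable {m k nk : ℕ}

lemma range_fromColumns (A : Matrix (Fin m) (Fin k) ℝ) (B : Matrix (Fin m) (Fin nk) ℝ) :
    LinearMap.range (Matrix.fromCols A B).mulVecLin
      = LinearMap.range A.mulVecLin ⊔ LinearMap.range B.mulVecLin := by
  apply le_antisymm
  · rintro x ⟨v, rfl⟩
    have : v = Sum.elim (v ∘ Sum.inl) (v ∘ Sum.inr) := by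
      funext s; cases s <;> rfl
    rw [Matrix.mulVecLin_apply, this, Matrix.fromCols_mulVec_sumElim]
    exact Submodule.add_mem_sup ⟨_, rfl⟩ ⟨_, rfl⟩
  · apply sup_le
    · rintro x ⟨v, rfl⟩
      exact ⟨Sum.elim v 0, by simp [Matrix.mulVecLin_apply]⟩
    · rintro x ⟨v, rfl⟩
      exact ⟨Sum.elim 0 v, by simp [Matrix.mulVecLin_apply]⟩

lemma rank_fromColumns_eq_finrank_sup (A : Matrix (Fin m) (Fin k) ℝ)
    (B : Matrix (Fin m) (Fin nk) ℝ) :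
    (Matrix.fromCols A B).rank
      = finrank ℝ (LinearMap.range A.mulVecLin ⊔ LinearMap.range B.mulVecLin : Submodule ℝ _) := by
  rw [Matrix.rank, range_fromColumns]

/-- if the column spaces are orthogonal (AᵀB = 0) the sup has dimension = sum -/
lemma finrank_sup_of_orth {A : Matrix (Fin m) (Fin k) ℝ} {B : Matrix (Fin m) (Fin nk) ℝ}
    (h : Aᵀ * B = 0) :
    finrank ℝ (LinearMap.range A.mulVecLin ⊔ LinearMap.range B.mulVecLin : Submodule ℝ _)
      = A.rank + B.rank := by
  have hinf : LinearMap.range A.mulVecLin ⊓ LinearMap.range B.mulVecLin = ⊥ := by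
    rw [Submodule.eq_bot_iff]
    rintro x ⟨⟨a, ha⟩, ⟨b, hb⟩⟩
    simp only [Matrix.mulVecLin_apply] at ha hb
    have hx : x ⬝ᵥ x = 0 := by
      nth_rewrite 1 [← ha]
      nth_rewrite 1 [← hb]
      rw [Matrix.dotProduct_mulVec, ← Matrix.vecMul_transpose, Matrix.vecMul_vecMul, h,
        Matrix.vecMul_zero, zero_dotProduct]
    exact (dotProduct_self_eq_zero).mp hx
  have := Submodule.finrank_sup_add_finrank_inf_eq (LinearMap.range A.mulVecLin)
    (LinearMap.range B.mulVecLin)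
  rw [hinf, finrank_bot] at this
  rw [Matrix.rank, Matrix.rank]
  omega

lemma finrank_sup_le_rank_add (A : Matrix (Fin m) (Fin k) ℝ) (B : Matrix (Fin m) (Fin nk) ℝ) :
    finrank ℝ (LinearMap.range A.mulVecLin ⊔ LinearMap.range B.mulVecLin : Submodule ℝ _)
      ≤ A.rank + B.rank := by
  have := Submodule.finrank_sup_add_finrank_inf_eq (LinearMap.range A.mulVecLin)
    (LinearMap.range B.mulVecLin)
  rw [Matrix.rank, Matrix.rank]
  omega

lemma isUnit_conj (A : Matrix (Fin m) (Fin k) ℝ) (h : A.rank = k) : IsUnit (Aᵀ * A) := by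
  rw [← Matrix.mulVec_surjective_iff_isUnit]
  have hr : (Aᵀ * A).rank = k := by rw [Matrix.rank_transpose_mul_self, h]
  rw [Matrix.rank] at hr
  have htop : LinearMap.range (Aᵀ * A).mulVecLin = ⊤ := by
    apply Submodule.eq_top_of_finrank_eq
    rw [hr]
    simp [Module.finrank_pi]
  intro y
  have : y ∈ LinearMap.range (Aᵀ * A).mulVecLin := htop ▸ Submodule.mem_top
  obtain ⟨v, hv⟩ := this
  exact ⟨v, hv⟩

end RankLemmas


lemma expand_bilinear {ι κ : Type*} [Fintype ι] [DecidableEq ι] [Fintype κ]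
    (p q : ι → ℝ) (g : ι → κ → ℝ)
    (h : ∀ s t, (∑ c, g s c * g t c) = if s = t then 1 else 0) :
    (∑ c, (∑ s, p s * g s c) * (∑ t, q t * g t c)) = ∑ s, p s * q s := by
  have e1 : ∀ c : κ, (∑ s, p s * g s c) * (∑ t, q t * g t c)
      = ∑ s, ∑ t, (p s * q t) * (g s c * g t c) := by
    intro c
    rw [Finset.sum_mul_sum]
    apply Finset.sum_congr rfl; intro s _
    apply Finset.sum_congr rfl; intro t _
    ring
  rw [Finset.sum_congr rfl fun c _ => e1 c, Finset.sum_comm]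
  have e2 : ∀ s : ι, (∑ c : κ, ∑ t, (p s * q t) * (g s c * g t c)) = p s * q s := by
    intro s
    rw [Finset.sum_comm]
    have e3 : ∀ t, (∑ c : κ, (p s * q t) * (g s c * g t c))
        = (p s * q t) * (if s = t then 1 else 0) := by
      intro t
      rw [← Finset.mul_sum, h s t]
    rw [Finset.sum_congr rfl fun t _ => e3 t]
    rw [Finset.sum_eq_single s]
    · simp
    · intro t _ hts
      rw [if_neg (fun hc => hts hc.symm), mul_zero]
    · simp
  exact Finset.sum_congr rfl fun s _ => e2 s

lemma exists_proj {m nk : ℕ} (Z : Matrix (Fin m) (Fin nk) ℝ) :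
    ∃ Q : Matrix (Fin m) (Fin m) ℝ, Qᵀ = Q ∧ Q * Q = Q ∧ Q * Z = Z ∧
      ∀ N : Matrix (Fin m) (Fin m) ℝ, Nᵀ * N = 1 →
        (∀ c, (∑ i, ((Q * N) i c) ^ 2) ≤ 1) ∧
        (∑ c, ∑ i, ((Q * N) i c) ^ 2) ≤ (Z.rank : ℝ) := by
  classical
  set E := EuclideanSpace ℝ (Fin m)
  set e := WithLp.linearEquiv 2 ℝ (Fin m → ℝ) with he
  set R : Submodule ℝ (Fin m → ℝ) := LinearMap.range Z.mulVecLin with hR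
  set W : Submodule ℝ E := R.map (e.symm : (Fin m → ℝ) →ₗ[ℝ] E) with hW
  set d := finrank ℝ W with hd
  have hdrank : d = Z.rank := by
    rw [hd, hW, LinearEquiv.finrank_map_eq, Matrix.rank]
  set b := stdOrthonormalBasis ℝ W with hb
  set f : Fin d → (Fin m → ℝ) := fun t => e ((b t : W) : E) with hf
  -- components
  have hfc : ∀ t c, f t c = ((b t : W) : E) c := by intro t c; rfl
  -- orthonormality in concrete form
  have ortho : ∀ s t, (∑ c, f s c * f t c) = if s = t then 1 else 0 := by
    intro s t
    have h1 : (inner ℝ (b s) (b t) : ℝ) = if s = t then (1:ℝ) else 0 := by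
      rcases eq_or_ne s t with rfl | hst
      · rw [if_pos rfl, real_inner_self_eq_norm_sq, b.orthonormal.1 s, one_pow]
      · rw [if_neg hst, b.orthonormal.2 hst]
    rw [← h1, Submodule.coe_inner, PiLp.inner_apply]
    simp only [RCLike.inner_apply, conj_trivial]
    apply Finset.sum_congr rfl
    intro c _
    rw [hfc, hfc, mul_comm]
  have hmemf : ∀ t, f t ∈ R := by
    intro t
    obtain ⟨y, hy, hy2⟩ := (b t).2
    have : f t = y := by
      rw [hf]
      simp only
      rw [← hy2]
      exact congrArg e (by rfl) |>.trans (e.apply_symm_apply y)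
    rwa [this]
  -- representation: Q *ᵥ z = z for z ∈ R, in coordinate form
  have hrepr : ∀ z ∈ R, ∀ i, (∑ t, (∑ c, f t c * z c) * f t i) = z i := by
    intro z hz i
    set y : W := ⟨e.symm z, Submodule.mem_map_of_mem hz⟩ with hy
    have h1 := b.sum_repr' y
    have h2 : ∀ t, (inner ℝ (b t) y : ℝ) = ∑ c, f t c * z c := by
      intro t
      rw [Submodule.coe_inner, PiLp.inner_apply]
      simp only [RCLike.inner_apply, conj_trivial]
      apply Finset.sum_congr rfl
      intro c _
      rw [hfc, mul_comm]
      rfl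
    have h3 : (((∑ t, (inner ℝ (b t) y : ℝ) • b t : W) : E)) = ((y : E)) := by rw [h1]
    have h4 : ((∑ t, (inner ℝ (b t) y : ℝ) • b t : W) : E)
        = ∑ t, (inner ℝ (b t) y : ℝ) • ((b t : W) : E) := by
      push_cast
      rfl
    have h8 : e (∑ t, (inner ℝ (b t) y : ℝ) • ((b t : W) : E))
        = ∑ t, (inner ℝ (b t) y : ℝ) • e ((b t : W) : E) := by
      rw [map_sum]
      apply Finset.sum_congr rfl
      intro t _
      rw [_root_.map_smul]
    have h6 : (∑ t, (inner ℝ (b t) y : ℝ) • e ((b t : W) : E)) i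
        = ∑ t, (inner ℝ (b t) y : ℝ) * f t i := by
      rw [Finset.sum_apply]
      apply Finset.sum_congr rfl
      intro t _
      rw [Pi.smul_apply, smul_eq_mul, hf]
    have h7 : e ((y : W) : E) i = z i := by
      have : ((y : W) : E) = e.symm z := rfl
      rw [this, e.apply_symm_apply]
    calc (∑ t, (∑ c, f t c * z c) * f t i)
        = ∑ t, (inner ℝ (b t) y : ℝ) * f t i := by
          apply Finset.sum_congr rfl; intro t _; rw [h2]
      _ = (∑ t, (inner ℝ (b t) y : ℝ) • e ((b t : W) : E)) i := h6.symm
      _ = e (∑ t, (inner ℝ (b t) y : ℝ) • ((b t : W) : E)) i := by rw [h8]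
      _ = e ((y : W) : E) i := by rw [← h4, h3]
      _ = z i := h7
  -- Bessel inequality, concrete
  have bessel : ∀ x : Fin m → ℝ, (∑ t, (∑ c, f t c * x c) ^ 2) ≤ ∑ c, (x c) ^ 2 := by
    intro x
    have horth : Orthonormal ℝ (fun t => ((b t : W) : E)) := by
      rw [orthonormal_iff_ite]
      intro s t
      rw [← Submodule.coe_inner]
      rcases eq_or_ne s t with rfl | hst
      · rw [if_pos rfl, real_inner_self_eq_norm_sq, b.orthonormal.1 s, one_pow]
      · rw [if_neg hst, b.orthonormal.2 hst]
    have hx := horth.sum_inner_products_le (s := Finset.univ) (e.symm x)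
    have h1 : ∀ t, (inner ℝ ((b t : W) : E) (e.symm x) : ℝ) = ∑ c, f t c * x c := by
      intro t
      rw [PiLp.inner_apply]
      simp only [RCLike.inner_apply, conj_trivial]
      apply Finset.sum_congr rfl
      intro c _
      rw [hfc, mul_comm]
      rfl
    have h2 : ‖(e.symm x : E)‖ ^ 2 = ∑ c, (x c) ^ 2 := by
      rw [← real_inner_self_eq_norm_sq, PiLp.inner_apply]
      simp only [RCLike.inner_apply, conj_trivial]
      apply Finset.sum_congr rfl
      intro c _
      have : (e.symm x : E) c = x c := rfl
      rw [this, sq]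
    rw [← h2]
    calc (∑ t, (∑ c, f t c * x c) ^ 2)
        = ∑ t, ‖(inner ℝ ((b t : W) : E) (e.symm x) : ℝ)‖ ^ 2 := by
          apply Finset.sum_congr rfl
          intro t _
          rw [h1, Real.norm_eq_abs, sq_abs]
      _ ≤ _ := hx
  -- the projection matrix
  set Q : Matrix (Fin m) (Fin m) ℝ := Matrix.of (fun i j => ∑ t, f t i * f t j) with hQ
  have hQapp : ∀ i j, Q i j = ∑ t, f t i * f t j := fun i j => rfl
  have hmulvec : ∀ (x : Fin m → ℝ) i, (Q *ᵥ x) i = ∑ t, (∑ c, f t c * x c) * f t i := by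
    intro x i
    calc (Q *ᵥ x) i = ∑ a, (∑ t, f t i * f t a) * x a := rfl
      _ = ∑ a, ∑ t, f t i * f t a * x a := by
          apply Finset.sum_congr rfl; intro a _; rw [Finset.sum_mul]
      _ = ∑ t, ∑ a, f t i * f t a * x a := Finset.sum_comm
      _ = ∑ t, (∑ c, f t c * x c) * f t i := by
          apply Finset.sum_congr rfl; intro t _
          rw [Finset.sum_mul]
          apply Finset.sum_congr rfl; intro c _
          ring
  have colmem : ∀ j, (fun i => Z i j) ∈ R := by
    intro j
    refine ⟨Pi.single j 1, ?_⟩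
    funext i
    simp only [Matrix.mulVecLin_apply, Matrix.mulVec, dotProduct, Pi.single_apply,
      mul_ite, mul_one, mul_zero]
    simp
  have hQsym : Qᵀ = Q := by
    ext i j
    simp only [Matrix.transpose_apply, hQapp]
    apply Finset.sum_congr rfl; intro t _; ring
  have hQZ : Q * Z = Z := by
    ext i j
    calc (Q * Z) i j = (Q *ᵥ fun c => Z c j) i := rfl
      _ = ∑ t, (∑ c, f t c * Z c j) * f t i := hmulvec _ i
      _ = Z i j := hrepr _ (colmem j) i
  have hQQ : Q * Q = Q := by
    have colQmem : ∀ j, (fun c => Q c j) ∈ R := by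
      intro j
      have hrw : (fun c => Q c j) = ∑ t, (f t j) • f t := by
        funext c
        rw [Finset.sum_apply]
        simp only [Pi.smul_apply, smul_eq_mul, hQapp]
        apply Finset.sum_congr rfl; intro t _; ring
      rw [hrw]
      exact Submodule.sum_mem _ fun t _ => Submodule.smul_mem _ _ (hmemf t)
    ext i j
    calc (Q * Q) i j = (Q *ᵥ fun c => Q c j) i := rfl
      _ = ∑ t, (∑ c, f t c * Q c j) * f t i := hmulvec _ i
      _ = Q i j := hrepr _ (colQmem j) i
  refine ⟨Q, hQsym, hQQ, hQZ, ?_⟩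
  intro N hN
  set γ : Fin d → Fin m → ℝ := fun t c => ∑ a, f t a * N a c with hγ
  have key : ∀ i c, (Q * N) i c = ∑ t, γ t c * f t i := by
    intro i c
    calc (Q * N) i c = (Q *ᵥ fun a => N a c) i := rfl
      _ = ∑ t, γ t c * f t i := hmulvec _ i
  have colSq : ∀ c, (∑ i, ((Q * N) i c) ^ 2) = ∑ t, (γ t c) ^ 2 := by
    intro c
    calc (∑ i, ((Q * N) i c) ^ 2)
        = ∑ i, (∑ t, γ t c * f t i) * (∑ s, γ s c * f s i) := by
          apply Finset.sum_congr rfl; intro i _; rw [key, sq]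
      _ = ∑ t, γ t c * γ t c := expand_bilinear _ _ _ ortho
      _ = ∑ t, (γ t c) ^ 2 := by apply Finset.sum_congr rfl; intro t _; rw [sq]
  constructor
  · intro c
    rw [colSq c]
    have h1 : (∑ t, (γ t c) ^ 2) ≤ ∑ a, (N a c) ^ 2 := bessel _
    have h2 : (∑ a, (N a c) ^ 2) = 1 := by
      have : (∑ a, (N a c) ^ 2) = (Nᵀ * N) c c := by
        rw [Matrix.mul_apply]
        apply Finset.sum_congr rfl; intro a _
        rw [Matrix.transpose_apply, sq]
      rw [this, hN, Matrix.one_apply_eq]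
    linarith
  · have hNNT : N * Nᵀ = 1 := mul_eq_one_comm.mp hN
    have hNorth : ∀ a b : Fin m, (∑ c, N a c * N b c) = if a = b then 1 else 0 := by
      intro a b
      have : (∑ c, N a c * N b c) = (N * Nᵀ) a b := by
        rw [Matrix.mul_apply]
        apply Finset.sum_congr rfl; intro c _; rw [Matrix.transpose_apply]
      rw [this, hNNT, Matrix.one_apply]
    calc (∑ c, ∑ i, ((Q * N) i c) ^ 2)
        = ∑ c, ∑ t, (γ t c) ^ 2 := by
          apply Finset.sum_congr rfl; intro c _; rw [colSq]
      _ = ∑ t, ∑ c, (γ t c) ^ 2 := Finset.sum_comm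
      _ = ∑ t : Fin d, (1 : ℝ) := by
          apply Finset.sum_congr rfl; intro t _
          calc (∑ c, (γ t c) ^ 2)
              = ∑ c, (∑ a, f t a * N a c) * (∑ b, f t b * N b c) := by
                apply Finset.sum_congr rfl; intro c _; rw [sq]
            _ = ∑ a, f t a * f t a := expand_bilinear _ _ _ hNorth
            _ = 1 := by rw [ortho t t, if_pos rfl]
      _ = (d : ℝ) := by rw [Finset.sum_const, Finset.card_univ, Fintype.card_fin, nsmul_eq_mul,
            mul_one]
      _ ≤ (Z.rank : ℝ) := by rw [hdrank]

lemma head_sum (g : ℕ → ℝ) (N ρ : ℕ) (h : ρ ≤ N) :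
    (∑ n ∈ Finset.range N, if n < ρ then g n else 0) = ∑ n ∈ Finset.range ρ, g n := by
  calc (∑ n ∈ Finset.range N, if n < ρ then g n else 0)
      = ∑ n ∈ Finset.range N, if n ∈ Finset.range ρ then g n else 0 := by
        apply Finset.sum_congr rfl; intro n _; simp
    _ = ∑ n ∈ Finset.range N ∩ Finset.range ρ, g n := by rw [Finset.sum_ite_mem]
    _ = _ := by rw [range_inter_range, min_eq_right h]

lemma frobSq_diagLike {m nk : ℕ} (A : Matrix (Fin m) (Fin nk) ℝ) (g : ℕ → ℝ)
    (h : ∀ i j, A i j = if (i : ℕ) = (j : ℕ) then g (i : ℕ) else 0) :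
    frobSq A = ∑ n ∈ Finset.range (min m nk), (g n) ^ 2 := by
  rw [← diag_sum (fun n => (g n) ^ 2)]
  unfold frobSq
  apply Finset.sum_congr rfl; intro i _
  apply Finset.sum_congr rfl; intro j _
  rw [h i j]
  by_cases hij : (i : ℕ) = (j : ℕ)
  · rw [if_pos hij, if_pos hij]
  · rw [if_neg hij, if_neg hij]
    norm_num

lemma frobSq_mul_S {m nk : ℕ} (N : Matrix (Fin m) (Fin m) ℝ) (S : Matrix (Fin m) (Fin nk) ℝ)
    (σ : ℕ → ℝ) (hS : ∀ i j, S i j = if (i : ℕ) = (j : ℕ) then σ ((i : ℕ) + 1) else 0)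
    (w : ℕ → ℝ)
    (hcol : ∀ c : Fin m, (∑ i, (N i c) ^ 2) = w (c : ℕ)) :
    frobSq (N * S) = ∑ n ∈ Finset.range (min m nk), σ (n + 1) ^ 2 * w n := by
  have hentry : ∀ (i : Fin m) (j : Fin nk), (N * S) i j
      = if h : (j : ℕ) < m then N i ⟨(j : ℕ), h⟩ * σ ((j : ℕ) + 1) else 0 := by
    intro i j
    rw [Matrix.mul_apply]
    by_cases h : (j : ℕ) < m
    · rw [dif_pos h, Finset.sum_eq_single (⟨(j : ℕ), h⟩ : Fin m)]
      · rw [hS]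
        simp
      · intro c _ hc
        rw [hS, if_neg, mul_zero]
        intro hcj
        exact hc (by simp [Fin.ext_iff, hcj])
      · simp
    · rw [dif_neg h]
      apply Finset.sum_eq_zero
      intro c _
      rw [hS, if_neg, mul_zero]
      omega
  unfold frobSq
  rw [Finset.sum_comm]
  have hcolsum : ∀ j : Fin nk, (∑ i, ((N * S) i j) ^ 2)
      = if (j : ℕ) < m then σ ((j : ℕ) + 1) ^ 2 * w (j : ℕ) else 0 := by
    intro j
    by_cases h : (j : ℕ) < m
    · rw [if_pos h]
      calc (∑ i, ((N * S) i j) ^ 2)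
          = ∑ i, (N i ⟨(j : ℕ), h⟩) ^ 2 * σ ((j : ℕ) + 1) ^ 2 := by
            apply Finset.sum_congr rfl; intro i _
            rw [hentry, dif_pos h, mul_pow]
        _ = σ ((j : ℕ) + 1) ^ 2 * w (j : ℕ) := by
            rw [← Finset.sum_mul, hcol ⟨(j : ℕ), h⟩, mul_comm]
    · rw [if_neg h]
      apply Finset.sum_eq_zero
      intro i _
      rw [hentry, dif_neg h]
      norm_num
  rw [Finset.sum_congr rfl fun j _ => hcolsum j]
  rw [Fin.sum_univ_eq_sum_range (fun n => if n < m then σ (n + 1) ^ 2 * w n else 0) nk]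
  calc (∑ n ∈ Finset.range nk, if n < m then σ (n + 1) ^ 2 * w n else 0)
      = ∑ n ∈ Finset.range nk, if n ∈ Finset.range m then σ (n + 1) ^ 2 * w n else 0 := by
        apply Finset.sum_congr rfl; intro n _; simp
    _ = ∑ n ∈ Finset.range nk ∩ Finset.range m, σ (n + 1) ^ 2 * w n := by
        rw [Finset.sum_ite_mem]
    _ = _ := by rw [range_inter_range, min_comm]
set_option maxHeartbeats 1000000 in
/-- The optimal value of the constrained problem equals
(σ_{r−k+1}² + σ_{r−k+2}² + ⋯)^{1/2}, σ the singular values of P⊥_{A₁}(A₂). -/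
theorem stmt3 {m k nk r : ℕ} (hkr : k ≤ r)
    (A₁ : Matrix (Fin m) (Fin k) ℝ) (A₂ : Matrix (Fin m) (Fin nk) ℝ)
    (hrank : A₁.rank = k)
    (P : Matrix (Fin m) (Fin m) ℝ) (hP : P = A₁ * (A₁ᵀ * A₁)⁻¹ * A₁ᵀ)
    (U : Matrix (Fin m) (Fin m) ℝ) (V : Matrix (Fin nk) (Fin nk) ℝ) (σ : ℕ → ℝ)
    (hU : Uᵀ * U = 1) (hV : Vᵀ * V = 1)
    (hσmono : ∀ i j : ℕ, i ≤ j → σ j ≤ σ i) (hσnonneg : ∀ i, 0 ≤ σ i)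
    (S : Matrix (Fin m) (Fin nk) ℝ)
    (hS : ∀ i j, S i j = if (i : ℕ) = (j : ℕ) then σ ((i : ℕ) + 1) else 0)
    (hSVD : (1 - P) * A₂ = U * S * Vᵀ) :
    IsLeast {c : ℝ | ∃ X₂ : Matrix (Fin m) (Fin nk) ℝ,
        (Matrix.fromCols A₁ X₂).rank ≤ r ∧ c = frob (A₂ - X₂)}
      (Real.sqrt (∑ i ∈ Finset.Icc (r - k + 1) (min m nk), σ i ^ 2)) := by
  classical
  have hdet : IsUnit (A₁ᵀ * A₁).det := (Matrix.isUnit_iff_isUnit_det _).mp (isUnit_conj A₁ hrank)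
  have hWl : (A₁ᵀ * A₁)⁻¹ * (A₁ᵀ * A₁) = 1 := Matrix.nonsing_inv_mul _ hdet
  have hWr : (A₁ᵀ * A₁) * (A₁ᵀ * A₁)⁻¹ = 1 := Matrix.mul_nonsing_inv _ hdet
  have hWsym : ((A₁ᵀ * A₁)⁻¹)ᵀ = (A₁ᵀ * A₁)⁻¹ := by
    rw [Matrix.transpose_nonsing_inv, Matrix.transpose_mul, Matrix.transpose_transpose]
  have hPsym : Pᵀ = P := by
    rw [hP, Matrix.transpose_mul, Matrix.transpose_mul, Matrix.transpose_transpose, hWsym,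
      ← Matrix.mul_assoc]
  have hPA₁ : P * A₁ = A₁ := by
    calc P * A₁ = A₁ * ((A₁ᵀ * A₁)⁻¹ * (A₁ᵀ * A₁)) := by rw [hP]; simp only [Matrix.mul_assoc]
      _ = A₁ := by rw [hWl, Matrix.mul_one]
  have hA₁tP : A₁ᵀ * P = A₁ᵀ := by
    have h := congrArg Matrix.transpose hPA₁
    rw [Matrix.transpose_mul, hPsym] at h
    exact h
  have hPP : P * P = P := by
    calc P * P = A₁ * (A₁ᵀ * A₁)⁻¹ * (A₁ᵀ * P) := by
          nth_rewrite 1 [hP]; simp only [Matrix.mul_assoc]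
      _ = P := by rw [hA₁tP, hP]
  have hA₁t1P : A₁ᵀ * (1 - P) = 0 := by
    rw [Matrix.mul_sub, Matrix.mul_one, hA₁tP, sub_self]
  have hfrobB : frobSq ((1 - P) * A₂) = ∑ n ∈ Finset.range (min m nk), σ (n + 1) ^ 2 := by
    rw [hSVD, Matrix.mul_assoc, frobSq_mul_orthL U hU, frobSq_mul_orthR V hV,
      frobSq_diagLike S (fun n => σ (n + 1)) hS]
  constructor
  · -- membership
    set T : Matrix (Fin nk) (Fin nk) ℝ :=
      Matrix.diagonal (fun j => if (j : ℕ) < r - k then (1 : ℝ) else 0) with hT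
    have hrankY : (U * (S * T) * Vᵀ).rank ≤ r - k := by
      have h1 : (U * (S * T) * Vᵀ).rank ≤ T.rank := by
        calc (U * (S * T) * Vᵀ).rank ≤ (U * (S * T)).rank := Matrix.rank_mul_le_left _ _
          _ ≤ (S * T).rank := Matrix.rank_mul_le_right _ _
          _ ≤ T.rank := Matrix.rank_mul_le_right _ _
      have h2 : T.rank ≤ r - k := by
        rw [hT, Matrix.rank_diagonal]
        have hlt : ∀ j : Fin nk, (if (j : ℕ) < r - k then (1 : ℝ) else 0) ≠ 0 →
            (j : ℕ) < r - k := by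
          intro j hj
          by_contra hc
          rw [if_neg hc] at hj
          exact hj rfl
        calc Fintype.card {j : Fin nk // (if (j : ℕ) < r - k then (1 : ℝ) else 0) ≠ 0}
            ≤ Fintype.card (Fin (r - k)) := Fintype.card_le_of_injective
              (fun j => ⟨(j.1 : ℕ), hlt j.1 j.2⟩)
              (by intro a b hab; ext; simpa [Fin.ext_iff] using hab)
          _ = r - k := Fintype.card_fin _
      omega
    refine ⟨P * A₂ + U * (S * T) * Vᵀ, ?_, ?_⟩
    · -- rank constraint
      rw [rank_fromColumns_eq_finrank_sup]
      have hsub : LinearMap.range (P * A₂ + U * (S * T) * Vᵀ).mulVecLin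
          ≤ LinearMap.range A₁.mulVecLin ⊔ LinearMap.range (U * (S * T) * Vᵀ).mulVecLin := by
        rintro x ⟨v, rfl⟩
        rw [Matrix.mulVecLin_apply, Matrix.add_mulVec]
        apply Submodule.add_mem_sup
        · refine ⟨((A₁ᵀ * A₁)⁻¹ * (A₁ᵀ * A₂)) *ᵥ v, ?_⟩
          rw [Matrix.mulVecLin_apply, Matrix.mulVec_mulVec]
          rw [hP]
          simp only [Matrix.mul_assoc]
        · exact ⟨v, rfl⟩
      calc finrank ℝ (LinearMap.range A₁.mulVecLin
              ⊔ LinearMap.range (P * A₂ + U * (S * T) * Vᵀ).mulVecLin : Submodule ℝ _)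
          ≤ finrank ℝ (LinearMap.range A₁.mulVecLin
              ⊔ LinearMap.range (U * (S * T) * Vᵀ).mulVecLin : Submodule ℝ _) :=
            Submodule.finrank_mono (sup_le le_sup_left hsub)
        _ ≤ A₁.rank + (U * (S * T) * Vᵀ).rank := finrank_sup_le_rank_add _ _
        _ ≤ r := by rw [hrank]; omega
    · -- value
      have hsubst : A₂ - (P * A₂ + U * (S * T) * Vᵀ) = U * (S - S * T) * Vᵀ := by
        have h1 : A₂ - (P * A₂ + U * (S * T) * Vᵀ)
            = (1 - P) * A₂ - U * (S * T) * Vᵀ := by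
          rw [Matrix.sub_mul, Matrix.one_mul]
          abel
        rw [h1, hSVD, Matrix.mul_sub, Matrix.sub_mul]
      have hent : ∀ i j, (S - S * T) i j
          = if (i : ℕ) = (j : ℕ) then (if (i : ℕ) < r - k then 0 else σ ((i : ℕ) + 1))
            else 0 := by
        intro i j
        rw [Matrix.sub_apply, hT, Matrix.mul_diagonal, hS i j]
        by_cases hij : (i : ℕ) = (j : ℕ)
        · rw [if_pos hij, if_pos hij, ← hij]
          by_cases hiρ : (i : ℕ) < r - k
          · rw [if_pos hiρ, if_pos hiρ, mul_one, sub_self]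
          · rw [if_neg hiρ, if_neg hiρ, mul_zero, sub_zero]
        · rw [if_neg hij, if_neg hij, zero_mul, sub_zero]
      show Real.sqrt _ = frob _
      rw [frob, hsubst, Matrix.mul_assoc, frobSq_mul_orthL U hU, frobSq_mul_orthR V hV,
        frobSq_diagLike _ (fun n => if n < r - k then 0 else σ (n + 1)) hent]
      congr 1
      rw [← shift_sum (fun n => σ n ^ 2) (min m nk) (r - k)]
      apply Finset.sum_congr rfl
      intro n _
      by_cases h : n < r - k
      · rw [if_pos h, if_pos h]
        norm_num
      · rw [if_neg h, if_neg h]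
  · -- lower bound
    rintro c ⟨X₂, hrk, rfl⟩
    rw [frob]
    apply Real.sqrt_le_sqrt
    have hA₁Z : A₁ᵀ * ((1 - P) * X₂) = 0 := by
      rw [← Matrix.mul_assoc, hA₁t1P, Matrix.zero_mul]
    have hrkZ : ((1 - P) * X₂).rank ≤ r - k := by
      have h1 : LinearMap.range ((1 - P) * X₂).mulVecLin
          ≤ LinearMap.range A₁.mulVecLin ⊔ LinearMap.range X₂.mulVecLin := by
        rintro x ⟨v, rfl⟩
        rw [Matrix.mulVecLin_apply, Matrix.sub_mul, Matrix.one_mul, Matrix.sub_mulVec]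
        apply Submodule.sub_mem
        · exact Submodule.mem_sup_right ⟨v, rfl⟩
        · apply Submodule.mem_sup_left
          refine ⟨((A₁ᵀ * A₁)⁻¹ * (A₁ᵀ * X₂)) *ᵥ v, ?_⟩
          rw [Matrix.mulVecLin_apply, Matrix.mulVec_mulVec]
          rw [hP]
          simp only [Matrix.mul_assoc]
      have h2 : k + ((1 - P) * X₂).rank ≤ r := by
        have h3 := finrank_sup_of_orth hA₁Z
        rw [hrank] at h3
        calc k + ((1 - P) * X₂).rank
            = finrank ℝ (LinearMap.range A₁.mulVecLin
              ⊔ LinearMap.range ((1 - P) * X₂).mulVecLin : Submodule ℝ _) := h3.symm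
          _ ≤ finrank ℝ (LinearMap.range A₁.mulVecLin
              ⊔ LinearMap.range X₂.mulVecLin : Submodule ℝ _) :=
              Submodule.finrank_mono (sup_le le_sup_left h1)
          _ = (Matrix.fromCols A₁ X₂).rank := (rank_fromColumns_eq_finrank_sup A₁ X₂).symm
          _ ≤ r := hrk
      omega
    obtain ⟨Q, hQs, hQi, hQZ2, hQbound⟩ := exists_proj ((1 - P) * X₂)
    have e1 : (1 - P) * (A₂ - X₂) = (1 - P) * A₂ - (1 - P) * X₂ := Matrix.mul_sub _ _ _
    have step1 : frobSq ((1 - P) * A₂ - (1 - P) * X₂) ≤ frobSq (A₂ - X₂) := by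
      have h := frobSq_split P hPsym hPP (A₂ - X₂)
      rw [e1] at h
      have h0 := frobSq_nonneg (P * (A₂ - X₂))
      linarith
    have e2 : (1 - Q) * ((1 - P) * A₂ - (1 - P) * X₂) = (1 - Q) * ((1 - P) * A₂) := by
      have h : (1 - Q) * ((1 - P) * X₂) = 0 := by
        rw [Matrix.sub_mul, Matrix.one_mul, hQZ2, sub_self]
      rw [Matrix.mul_sub, h, sub_zero]
    have step2 : frobSq ((1 - Q) * ((1 - P) * A₂))
        ≤ frobSq ((1 - P) * A₂ - (1 - P) * X₂) := by
      have h := frobSq_split Q hQs hQi ((1 - P) * A₂ - (1 - P) * X₂)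
      rw [e2] at h
      have h0 := frobSq_nonneg (Q * ((1 - P) * A₂ - (1 - P) * X₂))
      linarith
    have step3 : frobSq ((1 - Q) * ((1 - P) * A₂))
        = frobSq ((1 - P) * A₂) - frobSq (Q * ((1 - P) * A₂)) := by
      have h := frobSq_split Q hQs hQi ((1 - P) * A₂)
      linarith
    have hQB : frobSq (Q * ((1 - P) * A₂))
        ≤ ∑ n ∈ Finset.range (min (r - k) (min m nk)), σ (n + 1) ^ 2 := by
      have hQBe : Q * ((1 - P) * A₂) = (Q * U) * S * Vᵀ := by
        rw [hSVD]
        simp only [Matrix.mul_assoc]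
      rw [hQBe, frobSq_mul_orthR V hV]
      obtain ⟨hcol1, hcolsum⟩ := hQbound U hU
      set w : ℕ → ℝ := fun n => if h : n < m then (∑ i, ((Q * U) i ⟨n, h⟩) ^ 2) else 0 with hw
      have hcol : ∀ c : Fin m, (∑ i, ((Q * U) i c) ^ 2) = w (c : ℕ) := by
        intro c
        rw [hw]
        simp only
        rw [dif_pos c.isLt]
      have hwnn : ∀ n, 0 ≤ w n := by
        intro n
        rw [hw]
        simp only
        split
        · exact Finset.sum_nonneg fun _ _ => sq_nonneg _
        · exact le_refl 0
      rw [frobSq_mul_S (Q * U) S σ hS w hcol]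
      apply comb_bound
      · intro i j hij
        exact pow_le_pow_left₀ (hσnonneg _) (hσmono _ _ (by omega)) 2
      · intro i
        exact sq_nonneg _
      · exact hwnn
      · intro n
        rw [hw]
        simp only
        split
        · exact hcol1 _
        · norm_num
      · calc (∑ n ∈ Finset.range (min m nk), w n) ≤ ∑ n ∈ Finset.range m, w n :=
              Finset.sum_le_sum_of_subset_of_nonneg
                (Finset.range_subset_range.mpr (min_le_left m nk)) (fun n _ _ => hwnn n)
          _ = ∑ c : Fin m, ∑ i, ((Q * U) i c) ^ 2 := by
              rw [← Fin.sum_univ_eq_sum_range w m]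
              exact (Finset.sum_congr rfl fun c _ => hcol c).symm
          _ ≤ (((1 - P) * X₂).rank : ℝ) := hcolsum
          _ ≤ ((r - k : ℕ) : ℝ) := Nat.cast_le.mpr hrkZ
    have hsplit : (∑ n ∈ Finset.range (min m nk), σ (n + 1) ^ 2)
        = (∑ n ∈ Finset.range (min (r - k) (min m nk)), σ (n + 1) ^ 2)
          + ∑ i ∈ Finset.Icc (r - k + 1) (min m nk), σ i ^ 2 := by
      have hmin : min (r - k) (min m nk) ≤ min m nk := min_le_right _ _
      have h1 : ∀ n, σ (n + 1) ^ 2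
          = (if n < min (r - k) (min m nk) then σ (n + 1) ^ 2 else 0)
            + (if n < min (r - k) (min m nk) then 0 else σ (n + 1) ^ 2) := by
        intro n
        by_cases h : n < min (r - k) (min m nk) <;> simp [h]
      rw [Finset.sum_congr rfl fun n _ => h1 n, Finset.sum_add_distrib,
        head_sum _ _ _ hmin, shift_sum (fun n => σ n ^ 2) (min m nk) (min (r - k) (min m nk)),
        tail_eq (fun n => σ n ^ 2) (min m nk) (r - k)]
    linarith [step1, step2, step3, hQB, hfrobB, hsplit]
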